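/- For every measurable α:[0,1]→[0,1], the integral γ := ∫₀^∞ (1/(1+t) − t/(1+t²)) · α(1/(1+t)) dt is absolutely convergent, and for every λ>0 one has log φ^{(α)}(λ) = γ + ∫₀^∞ (t/(1+t²) − 1/(λ+t)) · α(1/(1+t)) dt. -/

import Mathlib

open MeasureTheory Real

theorem stmt7 (α : ℝ → ℝ) (hα : Measurable α)
    (hrange : ∀ x ∈ Set.Icc (0:ℝ) 1, α x ∈ Set.Icc (0:ℝ) 1) :
    IntegrableOn (fun t => (1 / (1 + t) - t / (1 + t ^ 2)) * α (1 / (1 + t)))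
      (Set.Ioi 0) volume ∧
    ∀ l : ℝ, 0 < l →
      Real.log (Real.exp (∫ x in (0:ℝ)..1, (l - 1) / (1 + (l - 1) * x) * α x)) =
        (∫ t in Set.Ioi (0:ℝ), (1 / (1 + t) - t / (1 + t ^ 2)) * α (1 / (1 + t))) +
          ∫ t in Set.Ioi (0:ℝ), (t / (1 + t ^ 2) - 1 / (l + t)) * α (1 / (1 + t)) := by
  have hαm : Measurable (fun t : ℝ => α (1 / (1 + t))) :=
    hα.comp (measurable_const.div (measurable_const.add measurable_id))
  have hmeas : ∀ c : ℝ → ℝ, Measurable c →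
      AEStronglyMeasurable (fun t => c t * α (1 / (1 + t)))
        (volume.restrict (Set.Ioi 0)) := fun c hc =>
    ((hc.mul hαm).aestronglyMeasurable).restrict
  have hbase : IntegrableOn (fun t : ℝ => (1 + t ^ 2)⁻¹) (Set.Ioi 0) volume :=
    integrable_inv_one_add_sq.integrableOn
  have hαb : ∀ t : ℝ, t ∈ Set.Ioi (0:ℝ) → |α (1 / (1 + t))| ≤ 1 := by
    intro t ht
    simp only [Set.mem_Ioi] at ht
    have h1 : (0:ℝ) < 1 + t := by linarith
    have hx : 1 / (1 + t) ∈ Set.Icc (0:ℝ) 1 := by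
      constructor
      · positivity
      · rw [div_le_one h1]; linarith
    have h2 := hrange _ hx
    rw [abs_le]
    exact ⟨by linarith [h2.1], h2.2⟩
  -- integrability of the first integrand
  have hA : IntegrableOn (fun t => (1 / (1 + t) - t / (1 + t ^ 2)) * α (1 / (1 + t)))
      (Set.Ioi 0) volume := by
    apply Integrable.mono' hbase
      (hmeas _ ((measurable_const.div (measurable_const.add measurable_id)).sub
        (measurable_id.div (measurable_const.add (measurable_id.pow_const 2)))))
    filter_upwards [ae_restrict_mem measurableSet_Ioi] with t ht
    simp only [Set.mem_Ioi] at ht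
    have h1 : (0:ℝ) < 1 + t := by linarith
    have h2 : (0:ℝ) < 1 + t ^ 2 := by positivity
    have hd : 1 / (1 + t) - t / (1 + t ^ 2) = (1 - t) / ((1 + t) * (1 + t ^ 2)) := by
      field_simp; ring
    have hb : |1 / (1 + t) - t / (1 + t ^ 2)| ≤ (1 + t ^ 2)⁻¹ := by
      rw [hd, abs_div, abs_of_pos (show (0:ℝ) < (1 + t) * (1 + t ^ 2) by positivity)]
      calc |1 - t| / ((1 + t) * (1 + t ^ 2)) ≤ (1 + t) / ((1 + t) * (1 + t ^ 2)) := by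
            gcongr
            exact abs_le.mpr ⟨by linarith, by linarith⟩
        _ = (1 + t ^ 2)⁻¹ := by field_simp
    calc ‖(1 / (1 + t) - t / (1 + t ^ 2)) * α (1 / (1 + t))‖
        = |1 / (1 + t) - t / (1 + t ^ 2)| * |α (1 / (1 + t))| := abs_mul _ _
      _ ≤ (1 + t ^ 2)⁻¹ * 1 := mul_le_mul hb (hαb t ht) (abs_nonneg _) (by positivity)
      _ = (1 + t ^ 2)⁻¹ := mul_one _
  refine ⟨hA, fun l hl => ?_⟩
  -- integrability of the second integrand
  have hB : IntegrableOn (fun t => (t / (1 + t ^ 2) - 1 / (l + t)) * α (1 / (1 + t)))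
      (Set.Ioi 0) volume := by
    apply Integrable.mono' (hbase.const_mul ((1 + l) ^ 2 / l))
      (hmeas _ ((measurable_id.div (measurable_const.add (measurable_id.pow_const 2))).sub
        (measurable_const.div (measurable_const.add measurable_id))))
    filter_upwards [ae_restrict_mem measurableSet_Ioi] with t ht
    simp only [Set.mem_Ioi] at ht
    have h1 : (0:ℝ) < l + t := by linarith
    have h2 : (0:ℝ) < 1 + t ^ 2 := by positivity
    have hd : t / (1 + t ^ 2) - 1 / (l + t) = (l * t - 1) / ((1 + t ^ 2) * (l + t)) := by
      field_simp; ring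
    have habs : |l * t - 1| ≤ (1 + l) ^ 2 / l * (l + t) := by
      rcases abs_cases (l * t - 1) with ⟨h, _⟩ | ⟨h, _⟩ <;> rw [h] <;>
        rw [div_mul_eq_mul_div, le_div_iff₀ hl] <;>
        nlinarith [mul_pos hl ht, mul_pos hl hl, mul_pos (mul_pos hl hl) ht,
          mul_pos (mul_pos hl hl) hl]
    have hb : |t / (1 + t ^ 2) - 1 / (l + t)| ≤ (1 + l) ^ 2 / l * (1 + t ^ 2)⁻¹ := by
      rw [hd, abs_div, abs_of_pos (show (0:ℝ) < (1 + t ^ 2) * (l + t) by positivity),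
        div_le_iff₀ (show (0:ℝ) < (1 + t ^ 2) * (l + t) by positivity)]
      calc |l * t - 1| ≤ (1 + l) ^ 2 / l * (l + t) := habs
        _ = (1 + l) ^ 2 / l * (1 + t ^ 2)⁻¹ * ((1 + t ^ 2) * (l + t)) := by
            field_simp
    calc ‖(t / (1 + t ^ 2) - 1 / (l + t)) * α (1 / (1 + t))‖
        = |t / (1 + t ^ 2) - 1 / (l + t)| * |α (1 / (1 + t))| := abs_mul _ _
      _ ≤ ((1 + l) ^ 2 / l * (1 + t ^ 2)⁻¹) * 1 :=
          mul_le_mul hb (hαb t ht) (abs_nonneg _) (by positivity)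
      _ = (1 + l) ^ 2 / l * (1 + t ^ 2)⁻¹ := mul_one _
  rw [Real.log_exp]
  -- change of variables
  have himg : (fun x : ℝ => x⁻¹ - 1) '' Set.Ioo 0 1 = Set.Ioi 0 := by
    ext t
    simp only [Set.mem_image, Set.mem_Ioo, Set.mem_Ioi]
    constructor
    · rintro ⟨x, ⟨hx0, hx1⟩, rfl⟩
      have : 1 < x⁻¹ := (one_lt_inv₀ hx0).mpr hx1
      linarith
    · intro ht
      have h1 : (0:ℝ) < 1 + t := by linarith
      refine ⟨(1 + t)⁻¹, ⟨by positivity, inv_lt_one_of_one_lt₀ (by linarith)⟩, ?_⟩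
      rw [inv_inv]; ring
  have hderiv : ∀ x ∈ Set.Ioo (0:ℝ) 1,
      HasDerivWithinAt (fun x : ℝ => x⁻¹ - 1) (-(x ^ 2)⁻¹) (Set.Ioo 0 1) x := fun x hx =>
    ((hasDerivAt_inv (ne_of_gt hx.1)).sub_const 1).hasDerivWithinAt
  have hinj : Set.InjOn (fun x : ℝ => x⁻¹ - 1) (Set.Ioo 0 1) := fun x _ y _ h =>
    inv_injective (by simpa using sub_left_injective h)
  have hchg := integral_image_eq_integral_abs_deriv_smul measurableSet_Ioo hderiv hinj
    (fun t => (1 / (1 + t) - 1 / (l + t)) * α (1 / (1 + t)))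
  rw [himg] at hchg
  have hpt : ∀ x ∈ Set.Ioo (0:ℝ) 1,
      |(-(x ^ 2)⁻¹)| • ((1 / (1 + (x⁻¹ - 1)) - 1 / (l + (x⁻¹ - 1))) * α (1 / (1 + (x⁻¹ - 1))))
        = (l - 1) / (1 + (l - 1) * x) * α x := by
    intro x hx
    obtain ⟨hx0, hx1⟩ := hx
    have hxne : x ≠ 0 := ne_of_gt hx0
    have hden : (0:ℝ) < 1 + (l - 1) * x := by nlinarith
    have e1 : 1 + (x⁻¹ - 1) = x⁻¹ := by ring
    have e2 : (1:ℝ) / x⁻¹ = x := by rw [one_div, inv_inv]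
    rw [e1, e2, abs_neg, abs_inv, abs_of_pos (by positivity), smul_eq_mul]
    have hxi : 1 < x⁻¹ := (one_lt_inv₀ hx0).mpr hx1
    have hlx : (0:ℝ) < l + (x⁻¹ - 1) := by linarith
    have e3 : 1 / (l + (x⁻¹ - 1)) = x / (1 + (l - 1) * x) := by
      rw [div_eq_div_iff (ne_of_gt hlx) (ne_of_gt hden)]
      field_simp
      ring
    rw [e3]
    have hden' : 1 - x + x * l ≠ 0 := by nlinarith
    field_simp
    have hu : (1 - x + x * l)⁻¹ * (1 - x + x * l) = 1 := inv_mul_cancel₀ hden'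
    linear_combination (-α x) * hu
  rw [setIntegral_congr_fun measurableSet_Ioo hpt] at hchg
  have hIoo : ∫ x in (0:ℝ)..1, (l - 1) / (1 + (l - 1) * x) * α x
      = ∫ x in Set.Ioo (0:ℝ) 1, (l - 1) / (1 + (l - 1) * x) * α x := by
    rw [intervalIntegral.integral_of_le zero_le_one, MeasureTheory.integral_Ioc_eq_integral_Ioo]
  rw [hIoo, ← hchg]
  rw [← integral_add hA hB]
  apply setIntegral_congr_fun measurableSet_Ioi
  intro t _
  simp only
  ring
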